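/- For every integer n ≥ 1, S(n)/√n > 1/√3. -/

import Mathlib

/-- `inv2 n` is the number of inversions in the binary representation of `n`,
i.e. the number of pairs of bit positions `a > b` such that bit `a` of `n` is `1`
and bit `b` of `n` is `0`. -/
def inv2 (n : ℕ) : ℕ :=
  ((Finset.range (n + 1) ×ˢ Finset.range (n + 1)).filter
    (fun p => p.2 < p.1 ∧ n.testBit p.1 = true ∧ n.testBit p.2 = false)).card

/-- `iSeq n = (-1)^(inv2 n)`. -/
def iSeq (n : ℕ) : ℤ := (-1) ^ inv2 n


/-- The summatory function `S N = ∑_{0 ≤ n ≤ N} iSeq n`. -/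
def S (N : ℕ) : ℤ := ∑ n ∈ Finset.range (N + 1), iSeq n

-- number of ones
def ones (n : ℕ) : ℕ := ((Finset.range (n+1)).filter (fun i => n.testBit i = true)).card

lemma testBit_lt {n i : ℕ} (h : n.testBit i = true) : i < n :=
  Nat.lt_of_lt_of_le (Nat.lt_two_pow_self (n := i)) (Nat.ge_two_pow_of_testBit h)

lemma le_of_testBit {n i : ℕ} (h : n.testBit i = true) : i < n + 1 :=
  Nat.lt_succ_of_lt (testBit_lt h)

lemma testBit_two_mul (n i : ℕ) : (2*n).testBit (i+1) = n.testBit i := by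
  rw [Nat.testBit_add_one]
  congr 1
  omega

lemma testBit_two_mul_add_one (n i : ℕ) : (2*n+1).testBit (i+1) = n.testBit i := by
  rw [Nat.testBit_add_one]
  congr 1
  omega

lemma testBit_two_mul_zero (n : ℕ) : (2*n).testBit 0 = false := by
  rw [Nat.testBit_zero]
  simp [Nat.mul_mod_right]

lemma testBit_two_mul_add_one_zero (n : ℕ) : (2*n+1).testBit 0 = true := by
  rw [Nat.testBit_zero]
  simp [Nat.add_mul_mod_self_left]

lemma ones_odd (n : ℕ) : ones (2*n+1) = ones n + 1 := by
  unfold ones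
  have h : (Finset.range (2*n+1+1)).filter (fun i => (2*n+1).testBit i = true)
      = insert 0 (((Finset.range (n+1)).filter (fun i => n.testBit i = true)).image (fun i => i+1)) := by
    ext i
    simp only [Finset.mem_filter, Finset.mem_range, Finset.mem_insert, Finset.mem_image]
    constructor
    · rintro ⟨hi, hb⟩
      cases i with
      | zero => exact Or.inl rfl
      | succ j =>
        rw [testBit_two_mul_add_one] at hb
        exact Or.inr ⟨j, ⟨le_of_testBit hb, hb⟩, rfl⟩
    · rintro (rfl | ⟨j, ⟨hj, hb⟩, rfl⟩)
      · exact ⟨by omega, testBit_two_mul_add_one_zero n⟩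
      · exact ⟨by omega, by rwa [testBit_two_mul_add_one]⟩
  rw [h, Finset.card_insert_of_notMem (by simp),
    Finset.card_image_of_injective _ (fun a b hab => by omega)]

lemma ones_even (n : ℕ) : ones (2*n) = ones n := by
  unfold ones
  have h : (Finset.range (2*n+1)).filter (fun i => (2*n).testBit i = true)
      = ((Finset.range (n+1)).filter (fun i => n.testBit i = true)).image (fun i => i+1) := by
    ext i
    simp only [Finset.mem_filter, Finset.mem_range, Finset.mem_image]
    constructor
    · rintro ⟨hi, hb⟩
      cases i with
      | zero => rw [testBit_two_mul_zero] at hb; exact absurd hb (by simp)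
      | succ j =>
        rw [testBit_two_mul] at hb
        exact ⟨j, ⟨le_of_testBit hb, hb⟩, rfl⟩
    · rintro ⟨j, ⟨hj, hb⟩, rfl⟩
      exact ⟨by have := testBit_lt hb; omega, by rwa [testBit_two_mul]⟩
  rw [h, Finset.card_image_of_injective _ (fun a b hab => by omega)]

lemma inv2_odd (n : ℕ) : inv2 (2*n+1) = inv2 n := by
  unfold inv2
  have h : ((Finset.range (2*n+1+1) ×ˢ Finset.range (2*n+1+1)).filter
        (fun p => p.2 < p.1 ∧ (2*n+1).testBit p.1 = true ∧ (2*n+1).testBit p.2 = false))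
      = (((Finset.range (n+1) ×ˢ Finset.range (n+1)).filter
        (fun p => p.2 < p.1 ∧ n.testBit p.1 = true ∧ n.testBit p.2 = false)).image
          (fun p => (p.1+1, p.2+1))) := by
    ext ⟨x, y⟩
    simp only [Finset.mem_filter, Finset.mem_product, Finset.mem_range, Finset.mem_image,
      Prod.ext_iff, Prod.exists]
    constructor
    · rintro ⟨⟨hx, hy⟩, hlt, hb1, hb0⟩
      match x, y with
      | 0, y => omega
      | x+1, 0 => rw [testBit_two_mul_add_one_zero] at hb0; exact absurd hb0 (by simp)
      | x+1, y+1 =>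
        rw [testBit_two_mul_add_one] at hb1 hb0
        exact ⟨x, y, ⟨⟨le_of_testBit hb1, by have := le_of_testBit hb1; omega⟩,
          by omega, hb1, hb0⟩, rfl, rfl⟩
    · rintro ⟨a, c, ⟨⟨ha, hc⟩, hlt, hb1, hb0⟩, rfl, rfl⟩
      refine ⟨⟨by omega, by omega⟩, by omega, ?_, ?_⟩
      · rwa [testBit_two_mul_add_one]
      · rwa [testBit_two_mul_add_one]
  rw [h, Finset.card_image_of_injective _ (fun a b hab => by
    simp only [Prod.ext_iff] at hab ⊢
    omega)]

lemma inv2_even (n : ℕ) : inv2 (2*n) = inv2 n + ones n := by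
  have key := Finset.card_filter_add_card_filter_not (p := fun p : ℕ × ℕ => p.2 = 0)
    (s := (Finset.range (2*n+1) ×ˢ Finset.range (2*n+1)).filter
        (fun p => p.2 < p.1 ∧ (2*n).testBit p.1 = true ∧ (2*n).testBit p.2 = false))

  have h0 : (((Finset.range (2*n+1) ×ˢ Finset.range (2*n+1)).filter
        (fun p => p.2 < p.1 ∧ (2*n).testBit p.1 = true ∧ (2*n).testBit p.2 = false)).filter
        (fun p : ℕ × ℕ => p.2 = 0)).card = ones n := by
    have h : (((Finset.range (2*n+1) ×ˢ Finset.range (2*n+1)).filter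
        (fun p => p.2 < p.1 ∧ (2*n).testBit p.1 = true ∧ (2*n).testBit p.2 = false)).filter
        (fun p : ℕ × ℕ => p.2 = 0))
        = ((Finset.range (n+1)).filter (fun i => n.testBit i = true)).image (fun i => (i+1, 0)) := by
      ext ⟨x, y⟩
      simp only [Finset.mem_filter, Finset.mem_product, Finset.mem_range, Finset.mem_image,
        Prod.ext_iff]
      constructor
      · rintro ⟨⟨⟨hx, hy⟩, hlt, hb1, hb0⟩, rfl⟩
        match x with
        | 0 => omega
        | x+1 =>
          rw [testBit_two_mul] at hb1
          exact ⟨x, ⟨le_of_testBit hb1, hb1⟩, rfl, rfl⟩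
      · rintro ⟨j, ⟨hj, hb⟩, rfl, rfl⟩
        have hjn := testBit_lt hb
        refine ⟨⟨⟨by omega, by omega⟩, by omega, by rwa [testBit_two_mul], ?_⟩, rfl⟩
        exact testBit_two_mul_zero n
    rw [h, Finset.card_image_of_injective _ (fun a b hab => by
      simp only [Prod.ext_iff] at hab; omega)]
    rfl
  have h1 : (((Finset.range (2*n+1) ×ˢ Finset.range (2*n+1)).filter
        (fun p => p.2 < p.1 ∧ (2*n).testBit p.1 = true ∧ (2*n).testBit p.2 = false)).filter
        (fun p : ℕ × ℕ => ¬ p.2 = 0)).card = inv2 n := by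
    have h : (((Finset.range (2*n+1) ×ˢ Finset.range (2*n+1)).filter
        (fun p => p.2 < p.1 ∧ (2*n).testBit p.1 = true ∧ (2*n).testBit p.2 = false)).filter
        (fun p : ℕ × ℕ => ¬ p.2 = 0))
        = (((Finset.range (n+1) ×ˢ Finset.range (n+1)).filter
        (fun p => p.2 < p.1 ∧ n.testBit p.1 = true ∧ n.testBit p.2 = false)).image
          (fun p => (p.1+1, p.2+1))) := by
      ext ⟨x, y⟩
      simp only [Finset.mem_filter, Finset.mem_product, Finset.mem_range, Finset.mem_image,
        Prod.ext_iff, Prod.exists]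
      constructor
      · rintro ⟨⟨⟨hx, hy⟩, hlt, hb1, hb0⟩, hy0⟩
        match x, y with
        | 0, y => omega
        | x+1, 0 => omega
        | x+1, y+1 =>
          rw [testBit_two_mul] at hb1 hb0
          exact ⟨x, y, ⟨⟨le_of_testBit hb1, by have := testBit_lt hb1; omega⟩,
            by omega, hb1, hb0⟩, rfl, rfl⟩
      · rintro ⟨a, c, ⟨⟨ha, hc⟩, hlt, hb1, hb0⟩, rfl, rfl⟩
        have han := testBit_lt hb1
        refine ⟨⟨⟨by omega, by omega⟩, by omega, ?_, ?_⟩, by omega⟩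
        · rwa [testBit_two_mul]
        · rwa [testBit_two_mul]
    rw [h, Finset.card_image_of_injective _ (fun a b hab => by
      simp only [Prod.ext_iff] at hab ⊢; omega)]
    rfl
  unfold inv2 ones at *
  omega

/-- Thue–Morse sign. -/
def tm (n : ℕ) : ℤ := (-1) ^ ones n

/-- twisted sequence -/
def B (n : ℕ) : ℤ := iSeq n * tm n

/-- twisted summatory function -/
def T (N : ℕ) : ℤ := ∑ n ∈ Finset.range (N + 1), B n

lemma iSeq_odd (n : ℕ) : iSeq (2*n+1) = iSeq n := by
  unfold iSeq; rw [inv2_odd]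

lemma iSeq_even (n : ℕ) : iSeq (2*n) = B n := by
  show (-1:ℤ)^inv2 (2*n) = iSeq n * tm n
  rw [inv2_even, pow_add]
  rfl

lemma tm_odd (n : ℕ) : tm (2*n+1) = -tm n := by
  unfold tm; rw [ones_odd, pow_succ]; ring

lemma tm_even (n : ℕ) : tm (2*n) = tm n := by
  unfold tm; rw [ones_even]

lemma tm_sq (n : ℕ) : tm n * tm n = 1 := by
  unfold tm; rw [← pow_add]; exact Even.neg_one_pow ⟨ones n, rfl⟩

lemma B_odd (n : ℕ) : B (2*n+1) = -B n := by
  unfold B; rw [iSeq_odd, tm_odd]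
  show iSeq n * -tm n = -(iSeq n * tm n)
  ring

lemma B_even (n : ℕ) : B (2*n) = iSeq n := by
  show iSeq (2*n) * tm (2*n) = iSeq n
  rw [iSeq_even, tm_even]
  show iSeq n * tm n * tm n = iSeq n
  rw [mul_assoc, tm_sq, mul_one]

lemma iSeq_pm (n : ℕ) : iSeq n = 1 ∨ iSeq n = -1 := by
  unfold iSeq; rcases Nat.even_or_odd (inv2 n) with h | h
  · exact Or.inl (Even.neg_one_pow h)
  · exact Or.inr (Odd.neg_one_pow h)

lemma tm_pm (n : ℕ) : tm n = 1 ∨ tm n = -1 := by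
  unfold tm; rcases Nat.even_or_odd (ones n) with h | h
  · exact Or.inl (Even.neg_one_pow h)
  · exact Or.inr (Odd.neg_one_pow h)

lemma B_pm (n : ℕ) : B n = 1 ∨ B n = -1 := by
  unfold B
  rcases iSeq_pm n with h | h <;> rcases tm_pm n with h2 | h2 <;> rw [h, h2] <;> norm_num

lemma S_succ (k : ℕ) : S (k+1) = S k + iSeq (k+1) := Finset.sum_range_succ _ _

lemma T_succ (k : ℕ) : T (k+1) = T k + B (k+1) := Finset.sum_range_succ _ _

lemma ST_odd (m : ℕ) : S (2*m+1) = S m + T m ∧ T (2*m+1) = S m - T m := by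
  induction m with
  | zero =>
    constructor <;> simp [S, T, Finset.sum_range_succ] <;> decide
  | succ k ih =>
    obtain ⟨ih1, ih2⟩ := ih
    have e1 : 2*(k+1)+1 = ((2*k+1)+1)+1 := by ring
    have hA : iSeq ((2*k+1)+1) = B (k+1) := by
      rw [show (2*k+1)+1 = 2*(k+1) from by ring, iSeq_even]
    have hA2 : iSeq (((2*k+1)+1)+1) = iSeq (k+1) := by
      rw [show ((2*k+1)+1)+1 = 2*(k+1)+1 from by ring, iSeq_odd]
    have hB1 : B ((2*k+1)+1) = iSeq (k+1) := by
      rw [show (2*k+1)+1 = 2*(k+1) from by ring, B_even]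
    have hB2 : B (((2*k+1)+1)+1) = -B (k+1) := by
      rw [show ((2*k+1)+1)+1 = 2*(k+1)+1 from by ring, B_odd]
    constructor
    · rw [e1, S_succ, S_succ, ih1, S_succ k, T_succ k, hA, hA2]
      ring
    · rw [e1, T_succ, T_succ, ih2, S_succ k, T_succ k, hB1, hB2]
      ring

lemma S_odd (m : ℕ) : S (2*m+1) = S m + T m := (ST_odd m).1
lemma T_odd (m : ℕ) : T (2*m+1) = S m - T m := (ST_odd m).2

lemma S_even (m : ℕ) : S (2*m) = S m + T m - iSeq m := by
  have h : S (2*m+1) = S (2*m) + iSeq (2*m+1) := S_succ _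
  rw [S_odd, iSeq_odd] at h
  omega

lemma T_even (m : ℕ) : T (2*m) = S m - T m + B m := by
  have h : T (2*m+1) = T (2*m) + B (2*m+1) := T_succ _
  rw [T_odd, B_odd] at h
  omega

def Hyp (m : ℕ) : Prop :=
  0 ≤ T m ∧ T m ≤ S m ∧ (S m - T m) % 2 = 0 ∧
  (S m = T m → B m = 1) ∧ (T m = 0 → B m = -1) ∧
  0 ≤ 3*(S m^2 + T m^2) - 2*(m:ℤ) - 2 ∧
  0 ≤ 3*(S m^2 + T m^2) - 3*iSeq m*(S m + T m) + 3*B m*(S m - T m) - 2*(m:ℤ) + 2 ∧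
  0 ≤ 3*(S m^2 + T m^2) - 3*iSeq m*(S m) - 3*B m*(T m) - 2*(m:ℤ) ∧
  0 ≤ 6*(S m^2 + T m^2) - 3*iSeq m*(S m + T m) + 3*B m*(S m - T m) - 4*(m:ℤ) - 4 ∧
  0 ≤ 6*(S m^2 + T m^2) - 3*iSeq m*(S m) - 3*B m*(T m) - 4*(m:ℤ) - 4 ∧
  0 ≤ 3*(S m^2 + T m^2) - 6*iSeq m*(S m) - 6*B m*(T m) - 2*(m:ℤ) + 6 ∧
  0 ≤ 6*(S m^2 + T m^2) + iSeq m*(-9*S m - 3*T m) + B m*(3*S m - 9*T m) - 4*(m:ℤ) + 6 ∧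
  0 ≤ 12*(S m^2 + T m^2) + iSeq m*(-15*S m - 9*T m) + B m*(9*S m - 15*T m) - 8*(m:ℤ) + 8 ∧
  0 ≤ 12*(S m^2 + T m^2) + iSeq m*(-12*S m - 3*T m) + B m*(3*S m - 12*T m) - 8*(m:ℤ)

lemma S_zero : S 0 = 1 := by
  show (∑ n ∈ Finset.range 1, iSeq n) = 1
  rw [Finset.sum_range_one]
  decide

lemma T_zero : T 0 = 1 := by
  show (∑ n ∈ Finset.range 1, B n) = 1
  rw [Finset.sum_range_one]
  decide

set_option maxHeartbeats 1000000 in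
lemma hyp_all : ∀ m, Hyp m := by
  intro m
  induction m using Nat.strong_induction_on with
  | _ m ih =>
    match m with
    | 0 =>
      refine ⟨?_, ?_, ?_, ?_, ?_, ?_, ?_, ?_, ?_, ?_, ?_, ?_, ?_, ?_⟩ <;>
        simp [S_zero, T_zero, show iSeq 0 = 1 from by decide, show B 0 = 1 from by decide]
    | Nat.succ m' =>
      rcases Nat.even_or_odd (m'+1) with ⟨j, hj⟩ | ⟨j, hj⟩
      · -- even case : m'+1 = 2*j, j ≥ 1
        have hj' : m' + 1 = 2*j := by omega
        obtain ⟨h1, h2, h3, h4, h5, h6, h7, h8, h9, h10, h11, h12, h13, h14⟩ :=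
          ih j (by omega)
        show Hyp (m'+1)
        rw [hj']
        unfold Hyp
        rw [S_even, T_even, iSeq_even, B_even]
        push_cast
        rcases B_pm j with hb | hb
        · have ct : 1 ≤ T j := by
            have hne : T j ≠ 0 := fun h => by rw [h5 h] at hb; exact absurd hb (by norm_num)
            omega
          rcases iSeq_pm j with ha | ha <;>
            simp only [ha, hb] at h7 h8 h9 h10 h11 h12 h13 h14 ⊢ <;>
            refine ⟨by omega, by omega, by omega, fun h => by first | trivial | omega, fun h => by first | trivial | omega,
              ?_, ?_, ?_, ?_, ?_, ?_, ?_, ?_, ?_⟩ <;>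
            linarith [h6, h7, h8, h9, h10, h11, h12, h13, h14, h1, h2, ct]
        · have cs : 2 ≤ S j - T j := by
            have hne : S j ≠ T j := fun h => by rw [h4 h] at hb; exact absurd hb (by norm_num)
            omega
          rcases iSeq_pm j with ha | ha <;>
            simp only [ha, hb] at h7 h8 h9 h10 h11 h12 h13 h14 ⊢ <;>
            refine ⟨by omega, by omega, by omega, fun h => by first | trivial | omega, fun h => by first | trivial | omega,
              ?_, ?_, ?_, ?_, ?_, ?_, ?_, ?_, ?_⟩ <;>
            linarith [h6, h7, h8, h9, h10, h11, h12, h13, h14, h1, h2, cs]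
      · -- odd case : m'+1 = 2*j+1
        obtain ⟨h1, h2, h3, h4, h5, h6, h7, h8, h9, h10, h11, h12, h13, h14⟩ :=
          ih j (by omega)
        show Hyp (m'+1)
        rw [hj]
        unfold Hyp
        rw [S_odd, T_odd, iSeq_odd, B_odd]
        push_cast
        rcases B_pm j with hb | hb
        · have ct : 1 ≤ T j := by
            have hne : T j ≠ 0 := fun h => by rw [h5 h] at hb; exact absurd hb (by norm_num)
            omega
          rcases iSeq_pm j with ha | ha <;>
            simp only [ha, hb] at h7 h8 h9 h10 h11 h12 h13 h14 ⊢ <;>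
            refine ⟨by omega, by omega, by omega, fun h => by first | trivial | omega, fun h => by first | trivial | omega,
              ?_, ?_, ?_, ?_, ?_, ?_, ?_, ?_, ?_⟩ <;>
            linarith [h6, h7, h8, h9, h10, h11, h12, h13, h14, h1, h2, ct]
        · have cs : 2 ≤ S j - T j := by
            have hne : S j ≠ T j := fun h => by rw [h4 h] at hb; exact absurd hb (by norm_num)
            omega
          rcases iSeq_pm j with ha | ha <;>
            simp only [ha, hb] at h7 h8 h9 h10 h11 h12 h13 h14 ⊢ <;>
            refine ⟨by omega, by omega, by omega, fun h => by first | trivial | omega, fun h => by first | trivial | omega,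
              ?_, ?_, ?_, ?_, ?_, ?_, ?_, ?_, ?_⟩ <;>
            linarith [h6, h7, h8, h9, h10, h11, h12, h13, h14, h1, h2, cs]

lemma S_ge (n : ℕ) : (n:ℤ) + 1 ≤ 3 * S n ^ 2 ∧ 1 ≤ S n := by
  obtain ⟨h1, h2, -, -, -, h6, -⟩ := hyp_all n
  have hsq : T n ^ 2 ≤ S n ^ 2 := by nlinarith
  have key : (n:ℤ) + 1 ≤ 3 * S n ^ 2 := by nlinarith
  refine ⟨key, ?_⟩
  rcases lt_or_ge (S n) 1 with h | h
  · have hs0 : S n = 0 := by omega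
    rw [hs0] at key
    simp at key
    omega
  · exact h


theorem summatory_strict_lower_bound (n : ℕ) (hn : 1 ≤ n) :
    (S n : ℝ) / Real.sqrt n > 1 / Real.sqrt 3 := by
  obtain ⟨key, hS1⟩ := S_ge n
  have h3 : (0:ℝ) < Real.sqrt 3 := Real.sqrt_pos.mpr (by norm_num)
  have hn0 : (0:ℝ) < (n:ℝ) := by exact_mod_cast hn
  have hsn : (0:ℝ) < Real.sqrt n := Real.sqrt_pos.mpr hn0
  have hSr : (0:ℝ) ≤ (S n : ℝ) := by exact_mod_cast le_trans (by norm_num) hS1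
  rw [gt_iff_lt, div_lt_div_iff₀ h3 hsn]
  have hlt : (n:ℝ) < 3 * (S n : ℝ)^2 := by
    have : ((n:ℤ):ℝ) + 1 ≤ 3 * ((S n : ℤ):ℝ)^2 := by exact_mod_cast key
    push_cast at this ⊢
    linarith
  have h1 : Real.sqrt n < Real.sqrt (3 * (S n : ℝ)^2) :=
    Real.sqrt_lt_sqrt (le_of_lt hn0) hlt
  have h2 : Real.sqrt (3 * (S n : ℝ)^2) = Real.sqrt 3 * (S n : ℝ) := by
    rw [Real.sqrt_mul (by norm_num), Real.sqrt_sq hSr]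
  calc 1 * Real.sqrt n = Real.sqrt n := one_mul _
    _ < Real.sqrt 3 * (S n : ℝ) := by rw [← h2]; exact h1
    _ = (S n : ℝ) * Real.sqrt 3 := mul_comm _ _
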